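/- There exists a ring of the form A ⋈^f J that is a Prüfer ring but not a Gaussian ring: with B := ℤ/8ℤ, I := 2ℤ/8ℤ, A := B ⋈ I, f : A → B the natural surjection (a, a+i) ↦ a, and J := I, the ring A ⋈^f J is Prüfer but not Gaussian. -/

import Mathlib

variable {A B : Type*} [CommRing A] [CommRing B]

/-- The amalgamation `A ⋈^f J` of `A` and `B` along the ideal `J` with respect to `f`,
as a subring of `A × B`. -/
def amalg (f : A →+* B) (J : Ideal B) : Subring (A × B) where
  carrier := {p | ∃ a, ∃ j ∈ J, p = (a, f a + j)}
  zero_mem' := ⟨0, 0, J.zero_mem, by ext <;> simp⟩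
  one_mem' := ⟨1, 0, J.zero_mem, by ext <;> simp⟩
  add_mem' := by
    rintro _ _ ⟨a, j, hj, rfl⟩ ⟨a', j', hj', rfl⟩
    exact ⟨a + a', j + j', J.add_mem hj hj', by simp [Prod.ext_iff]; ring⟩
  neg_mem' := by
    rintro _ ⟨a, j, hj, rfl⟩
    exact ⟨-a, -j, J.neg_mem hj, by simp [Prod.ext_iff]; ring⟩
  mul_mem' := by
    rintro _ _ ⟨a, j, hj, rfl⟩ ⟨a', j', hj', rfl⟩
    exact ⟨a * a', f a * j' + j * f a' + j * j',
      J.add_mem (J.add_mem (J.mul_mem_left _ hj') (J.mul_mem_right _ hj)) (J.mul_mem_right _ hj),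
      by simp [Prod.ext_iff]; ring⟩

/-- The set of zero-divisors of a ring. -/
def zdSet (R : Type*) [CommRing R] : Set R := {a | ∃ b, b ≠ 0 ∧ a * b = 0}

/-- The content ideal of a polynomial: the ideal generated by its coefficients. -/
def contentIdeal {R : Type*} [CommRing R] (p : Polynomial R) : Ideal R :=
  Ideal.span (Set.range p.coeff)

/-- A polynomial is Gaussian if `c(ph) = c(p) c(h)` for every polynomial `h`. -/
def IsGaussianPoly {R : Type*} [CommRing R] (p : Polynomial R) : Prop :=
  ∀ h : Polynomial R, contentIdeal (p * h) = contentIdeal p * contentIdeal h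

/-- A Gaussian ring. -/
def IsGaussianRing (R : Type*) [CommRing R] : Prop :=
  ∀ p q : Polynomial R, contentIdeal (p * q) = contentIdeal p * contentIdeal q

/-- A Prüfer ring: every finitely generated regular ideal is invertible
(in the total ring of quotients). -/
def IsPruferRing (R : Type*) [CommRing R] : Prop :=
  ∀ I : Ideal R, I.FG → (∃ r ∈ I, r ∈ nonZeroDivisors R) →
    ∃ T : FractionalIdeal (nonZeroDivisors R) (FractionRing R),
      (I : FractionalIdeal (nonZeroDivisors R) (FractionRing R)) * T = 1

/-- The ideal `2ℤ/8ℤ` of `ℤ/8ℤ`. -/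
def I8 : Ideal (ZMod 8) := Ideal.span {(2 : ZMod 8)}

/-- `A := (ℤ/8ℤ) ⋈ I8`, the amalgamated duplication. -/
def A8 : Subring (ZMod 8 × ZMod 8) := amalg (RingHom.id (ZMod 8)) I8

/-- The natural surjection `A8 → ℤ/8ℤ`, `(a, a+i) ↦ a`. -/
def f8 : ↥A8 →+* ZMod 8 := (RingHom.fst (ZMod 8) (ZMod 8)).comp A8.subtype


open Polynomial

lemma h2I8 : (2 : ZMod 8) ∈ I8 := Ideal.subset_span rfl
lemma h4I8 : (4 : ZMod 8) ∈ I8 := Ideal.mem_span_singleton.mpr ⟨2, by decide⟩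

/-- Explicit element constructor for the double amalgamation. -/
def mk8 (a i j : ZMod 8) (hi : i ∈ I8) (hj : j ∈ I8) : ↥(amalg f8 I8) :=
  ⟨(⟨(a, a + i), a, i, hi, rfl⟩, a + j), ⟨(a, a + i), a, i, hi, rfl⟩, j, hj, rfl⟩

lemma four_mul_I8 {i : ZMod 8} (hi : i ∈ I8) : (4 : ZMod 8) * i = 0 := by
  obtain ⟨c, rfl⟩ := Ideal.mem_span_singleton.mp hi
  rw [← mul_assoc, show ((4:ZMod 8)*2) = 0 by decide, zero_mul]

set_option maxHeartbeats 4000000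
set_option synthInstance.maxHeartbeats 4000000

/-- `A8 ⋈^{f8} I8` is a Prüfer ring which is not Gaussian. -/
theorem example_prufer_not_gaussian :
    IsPruferRing ↥(amalg f8 I8) ∧ ¬ IsGaussianRing ↥(amalg f8 I8) := by
  constructor
  · -- Prüfer: in a finite ring every regular element is a unit, so a regular ideal is ⊤.
    rintro I hfg ⟨r, hrI, hr⟩
    have hu : IsUnit r := by
      have hinj : Function.Injective (fun x : ↥(amalg f8 I8) => x * r) := by
        intro x y hxy
        simp only at hxy
        have h0 : (x - y) * r = 0 := by rw [sub_mul, hxy, sub_self]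
        exact sub_eq_zero.mp (hr.2 _ h0)
      obtain ⟨s, hs⟩ := (Finite.injective_iff_surjective.mp hinj) 1
      exact IsUnit.of_mul_eq_one s (by rw [mul_comm]; exact hs)
    have htop : I = ⊤ := Ideal.eq_top_of_isUnit_mem I hrI hu
    refine ⟨1, ?_⟩
    rw [htop, mul_one, FractionalIdeal.coeIdeal_top]
  · intro h
    set u : ↥(amalg f8 I8) := mk8 0 0 2 I8.zero_mem h2I8 with hu_def
    set v : ↥(amalg f8 I8) := mk8 0 2 0 h2I8 I8.zero_mem with hv_def
    set xx : ↥(amalg f8 I8) := mk8 0 0 4 I8.zero_mem h4I8 with hxx_def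
    set w : ↥(amalg f8 I8) := mk8 0 4 4 h4I8 h4I8 with hw_def
    have huv : u * v = 0 := by decide
    have hx : u * u = xx := by decide
    have hw : u * u + v * v = w := by decide
    set p : Polynomial ↥(amalg f8 I8) := Polynomial.C u + Polynomial.C v * Polynomial.X with hp_def
    set q : Polynomial ↥(amalg f8 I8) := Polynomial.C v + Polynomial.C u * Polynomial.X with hq_def
    have hpq : p * q = Polynomial.C w * Polynomial.X := by
      have expand : p * q = Polynomial.C (u * v) + Polynomial.C (u * u + v * v) * Polynomial.X
          + Polynomial.C (u * v) * Polynomial.X ^ 2 := by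
        simp only [hp_def, hq_def, Polynomial.C_add, Polynomial.C_mul]
        ring
      rw [expand, huv, hw, Polynomial.C_0, zero_mul, zero_add, add_zero]
    have hp0 : p.coeff 0 = u := by simp [hp_def]
    have hq1 : q.coeff 1 = u := by simp [hq_def]
    have hxmem : xx ∈ _root_.contentIdeal p * _root_.contentIdeal q := by
      rw [← hx]
      exact Ideal.mul_mem_mul (Ideal.subset_span ⟨0, hp0⟩) (Ideal.subset_span ⟨1, hq1⟩)
    have hxc : xx ∈ _root_.contentIdeal (p * q) := by rw [h p q]; exact hxmem
    rw [hpq] at hxc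
    have hle : _root_.contentIdeal (Polynomial.C w * Polynomial.X) ≤ Ideal.span {w} := by
      refine Ideal.span_le.mpr ?_
      rintro _ ⟨n, rfl⟩
      rw [Polynomial.coeff_C_mul, Polynomial.coeff_X]
      split_ifs with h1
      · rw [mul_one]; exact Ideal.subset_span rfl
      · rw [mul_zero]; exact Ideal.zero_mem _
    obtain ⟨r, hrw⟩ := Ideal.mem_span_singleton'.mp (hle hxc)
    obtain ⟨xa, j, hj, hr2⟩ := r.2
    obtain ⟨a, i, hi, hxa⟩ := xa.2
    -- pass to components
    have hval : xx.val = r.val * w.val := congrArg Subtype.val hrw.symm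
    rw [hr2] at hval
    have e1 : xx.val.1.val = xa.val * w.val.1.val := congrArg (fun z => z.1.val) hval
    have e2 : xx.val.2 = (f8 xa + j) * w.val.2 := congrArg Prod.snd hval
    rw [hxa] at e1
    have hf8 : f8 xa = a := by
      show xa.val.1 = a
      rw [hxa]
    rw [hf8] at e2
    have e1' : (0 : ZMod 8) = (a + i) * 4 := congrArg Prod.snd e1
    have e2' : (4 : ZMod 8) = (a + j) * 4 := e2
    rw [add_mul, mul_comm i 4, four_mul_I8 hi, add_zero] at e1'
    rw [add_mul, mul_comm j 4, four_mul_I8 hj, add_zero] at e2'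
    rw [← e1'] at e2'
    exact absurd e2' (by decide)
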